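/- Let M be a squarefree P-module of dimension d with the ℕ^d-grading induced by deg x_σ = e_{rank σ}. Then the ℕ^d-graded Hilbert series of M equals (Σ_{S⊆[d]} h_S(M) t^S) / ∏_{i=1}^d (1−t_i), where h_S(M) = Σ_{T⊆S} (−1)^{|S|−|T|} dim_K M_{e_T}. -/

import Mathlib

open Classical DirectSum

/-- `P̂ = P \ {⊥}`. -/
abbrev Phat (P : Type) [PartialOrder P] [OrderBot P] := {σ : P // σ ≠ ⊥}

variable {K : Type} [Field K] {P : Type} [Fintype P] [PartialOrder P] [OrderBot P]
  [DecidableEq P]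

/-- `supp u` is a face of the order complex `Δ_P`, i.e. a chain of `P̂`. -/
def ChainSupp (u : Phat P →₀ ℕ) : Prop :=
  ∀ σ ∈ u.support, ∀ τ ∈ u.support, (σ : P) ≤ (τ : P) ∨ (τ : P) ≤ (σ : P)

/-- `τ ≤ max (supp u)` (in particular `supp u` has a maximum). -/
def LeMaxSupp (u : Phat P →₀ ℕ) (τ : Phat P) : Prop :=
  ∃ ρ ∈ u.support, (τ : P) ≤ (ρ : P) ∧ ∀ σ ∈ u.support, (σ : P) ≤ (ρ : P)

/-- A squarefree `P`-module: a finitely generated `ℕ^{|P̂|}`-graded module `M` over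
`R = K[x_σ : σ ∈ P̂]` (the grading `π` being given by `K`-subspaces with
`x_τ · M_u ⊆ M_{u + e_τ}`) such that
(a) `M_u = 0` whenever `supp u ∉ Δ_P`, and
(b) `×x_τ : M_u → M_{u+e_τ}` is bijective whenever `supp (u + e_τ) ∈ Δ_P` and
`τ ≤ max (supp u)`. -/
def IsSquarefreePMod (M : Type) [AddCommGroup M]
    [Module (MvPolynomial (Phat P) K) M] [Module K M]
    [IsScalarTower K (MvPolynomial (Phat P) K) M]
    (π : (Phat P →₀ ℕ) → Submodule K M) : Prop :=
  DirectSum.IsInternal π ∧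
  Module.Finite (MvPolynomial (Phat P) K) M ∧
  (∀ u, FiniteDimensional K (π u)) ∧
  (∀ (u) (τ : Phat P), ∀ x ∈ π u,
    (MvPolynomial.X τ : MvPolynomial (Phat P) K) • x ∈ π (u + Finsupp.single τ 1)) ∧
  (∀ u, ¬ ChainSupp u → π u = ⊥) ∧
  (∀ (u) (τ : Phat P), ChainSupp (u + Finsupp.single τ 1) → LeMaxSupp u τ →
    Set.BijOn (fun x => (MvPolynomial.X τ : MvPolynomial (Phat P) K) • x)
      (↑(π u) : Set M) (↑(π (u + Finsupp.single τ 1)) : Set M))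

/-- The exponent vector `e_σ` (with `e_⊥ = 0`). -/
noncomputable def eVec (σ : P) : Phat P →₀ ℕ :=
  if h : σ = ⊥ then 0 else Finsupp.single ⟨σ, h⟩ 1

/-- The `ℕ^d`-degree (indexed here by ranks `1, …, d` inside `ℕ`) induced by
`deg x_σ = e_{rk σ}`. -/
noncomputable def rkDeg (rk : P → ℕ) (u : Phat P →₀ ℕ) : ℕ →₀ ℕ :=
  u.sum (fun σ m => Finsupp.single (rk σ.1) m)

set_option linter.unusedSectionVars false

/-! ### Auxiliary lemmas -/

section AuxCombinatorics

/-- `e_S = ∑_{i ∈ S} e_i` as a finitely supported function. -/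
noncomputable def eFin (S : Finset ℕ) : ℕ →₀ ℕ := ∑ i ∈ S, Finsupp.single i 1

lemma eFin_apply (S : Finset ℕ) (i : ℕ) : eFin S i = if i ∈ S then 1 else 0 := by
  classical
  simp only [eFin, Finsupp.finset_sum_apply, Finsupp.single_apply]
  rw [Finset.sum_ite_eq' S i (fun _ => 1)]

lemma eFin_support (S : Finset ℕ) : (eFin S).support = S := by
  ext i
  simp [Finsupp.mem_support_iff, eFin_apply]

lemma eFin_le_iff (S : Finset ℕ) (v : ℕ →₀ ℕ) : eFin S ≤ v ↔ ∀ i ∈ S, 1 ≤ v i := by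
  rw [Finsupp.le_iff, eFin_support]
  refine forall₂_congr fun i hi => ?_
  rw [eFin_apply, if_pos hi]

end AuxCombinatorics

section AuxOrder

/-- The rank function is strictly monotone. -/
lemma rk_lt_of_lt (rk : P → ℕ) (hcov : ∀ x y : P, x ⋖ y → rk y = rk x + 1) :
    ∀ a b : P, a < b → rk a < rk b := by
  have wf : WellFounded ((· > ·) : P → P → Prop) := (Finite.to_wellFoundedGT).wf
  refine fun a => wf.induction (C := fun a => ∀ b, a < b → rk a < rk b) a ?_
  intro x ih b hxb
  obtain ⟨c, hxc, hcb⟩ := exists_covBy_le_of_lt hxb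
  rcases hcb.eq_or_lt with rfl | hlt
  · rw [hcov x c hxc]; omega
  · have h1 := ih c hxc.lt b hlt
    have h2 := hcov x c hxc
    omega

/-- Every nonempty chain (as a finset) has a maximum element. -/
lemma chain_exists_max (s : Finset (Phat P)) (hs : s.Nonempty)
    (hc : ∀ σ ∈ s, ∀ τ ∈ s, (σ : P) ≤ (τ : P) ∨ (τ : P) ≤ (σ : P)) :
    ∃ ρ ∈ s, ∀ σ ∈ s, (σ : P) ≤ (ρ : P) := by
  classical
  induction s using Finset.induction_on with
  | empty => exact absurd hs (by simp)
  | @insert a s ha ih =>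
    rcases s.eq_empty_or_nonempty with rfl | hne
    · exact ⟨a, by simp, by simp⟩
    · obtain ⟨ρ, hρs, hρ⟩ := ih hne (fun σ hσ τ hτ =>
        hc σ (Finset.mem_insert_of_mem hσ) τ (Finset.mem_insert_of_mem hτ))
      rcases hc a (Finset.mem_insert_self a s) ρ (Finset.mem_insert_of_mem hρs) with hle | hle
      · exact ⟨ρ, Finset.mem_insert_of_mem hρs, fun σ hσ => by
          rcases Finset.mem_insert.1 hσ with rfl | hσ
          · exact hle
          · exact hρ σ hσ⟩
      · exact ⟨a, Finset.mem_insert_self a s, fun σ hσ => by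
          rcases Finset.mem_insert.1 hσ with rfl | hσ
          · exact le_refl _
          · exact (hρ σ hσ).trans hle⟩

end AuxOrder
section AuxFinsupp

lemma rkDeg_apply (rk : P → ℕ) (u : Phat P →₀ ℕ) (i : ℕ) :
    rkDeg rk u i = ∑ τ ∈ u.support, if rk τ.1 = i then u τ else 0 := by
  classical
  rw [rkDeg, Finsupp.sum, Finsupp.finset_sum_apply]
  exact Finset.sum_congr rfl fun τ _ => Finsupp.single_apply

lemma rkDeg_support (rk : P → ℕ) (u : Phat P →₀ ℕ) :
    (rkDeg rk u).support = u.support.image (fun σ => rk σ.1) := by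
  classical
  ext i
  rw [Finsupp.mem_support_iff, rkDeg_apply, Finset.mem_image]
  constructor
  · intro hne
    obtain ⟨τ, hτ, hval⟩ := Finset.exists_ne_zero_of_sum_ne_zero hne
    refine ⟨τ, hτ, ?_⟩
    by_contra hc
    exact hval (if_neg hc)
  · rintro ⟨τ, hτ, rfl⟩
    intro hz
    rw [Finset.sum_eq_zero_iff] at hz
    have := hz τ hτ
    rw [if_pos rfl] at this
    exact (Finsupp.mem_support_iff.1 hτ) this

lemma rkDeg_single (rk : P → ℕ) (σ : Phat P) (m : ℕ) :
    rkDeg rk (Finsupp.single σ m) = Finsupp.single (rk σ.1) m := by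
  classical
  rcases eq_or_ne m 0 with rfl | hm
  · simp [rkDeg]
  · rw [rkDeg, Finsupp.sum_single_index]
    simp

lemma rkDeg_add (rk : P → ℕ) (a b : Phat P →₀ ℕ) :
    rkDeg rk (a + b) = rkDeg rk a + rkDeg rk b := by
  classical
  rw [rkDeg, Finsupp.sum_add_index' (fun _ => Finsupp.single_zero _)
    (fun σ m n => Finsupp.single_add _ _ _)]
  rfl

lemma rkDeg_sum {α : Type} (rk : P → ℕ) (s : Finset α) (F : α → (Phat P →₀ ℕ)) :
    rkDeg rk (∑ a ∈ s, F a) = ∑ a ∈ s, rkDeg rk (F a) := by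
  classical
  induction s using Finset.induction_on with
  | empty => simp [rkDeg]
  | @insert a s ha ih => rw [Finset.sum_insert ha, rkDeg_add, ih, Finset.sum_insert ha]

/-- `u - e_τ`. -/
noncomputable def decE (u : Phat P →₀ ℕ) (τ : Phat P) : Phat P →₀ ℕ := u - Finsupp.single τ 1

/-- total degree of a finsupp -/
lemma totdeg_add (a b : Phat P →₀ ℕ) :
    ((a + b).sum fun _ m => m) = (a.sum fun _ m => m) + (b.sum fun _ m => m) :=
  Finsupp.sum_add_index' (fun _ => rfl) (fun _ _ _ => rfl)

lemma sum_single_support (u : Phat P →₀ ℕ) :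
    ∑ σ ∈ u.support, Finsupp.single σ (u σ) = u := by
  classical
  conv_rhs => rw [← Finsupp.sum_single u]
  rfl

lemma sub_single_apply (u : Phat P →₀ ℕ) (τ σ : Phat P) :
    (decE u τ) σ = if σ = τ then u σ - 1 else u σ := by
  classical
  rw [decE, Finsupp.tsub_apply, Finsupp.single_apply]
  by_cases h : σ = τ
  · subst h; rw [if_pos rfl, if_pos rfl]
  · rw [if_neg (fun hc => h hc.symm), if_neg h, Nat.sub_zero]

lemma sub_single_add (u : Phat P →₀ ℕ) (τ : Phat P) (hτ : τ ∈ u.support) :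
    (decE u τ) + Finsupp.single τ 1 = u := by
  classical
  have h1 : (1 : ℕ) ≤ u τ := Nat.one_le_iff_ne_zero.2 (Finsupp.mem_support_iff.1 hτ)
  ext σ
  rw [Finsupp.add_apply, sub_single_apply, Finsupp.single_apply]
  by_cases h : σ = τ
  · subst h; rw [if_pos rfl, if_pos rfl]; omega
  · rw [if_neg h, if_neg (fun hc => h hc.symm), Nat.add_zero]

lemma sub_single_support_subset (u : Phat P →₀ ℕ) (τ : Phat P) :
    (decE u τ).support ⊆ u.support := by
  intro σ hσ
  rw [Finsupp.mem_support_iff, sub_single_apply] at hσ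
  rw [Finsupp.mem_support_iff]
  split_ifs at hσ with h <;> omega

lemma totdeg_sub_single (u : Phat P →₀ ℕ) (τ : Phat P) (hτ : τ ∈ u.support) :
    ((decE u τ).sum fun _ m => m) + 1 = u.sum fun _ m => m := by
  classical
  conv_rhs => rw [← sub_single_add u τ hτ]
  rw [totdeg_add, Finsupp.sum_single_index rfl]

lemma support_subset_singleton (u : Phat P →₀ ℕ) (ρ : Phat P) (h : u.support ⊆ {ρ}) :
    u = Finsupp.single ρ (u ρ) := by
  classical
  ext σ
  rw [Finsupp.single_apply]
  split_ifs with hc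
  · subst hc; rfl
  · by_contra hne
    have := h (Finsupp.mem_support_iff.2 hne)
    rw [Finset.mem_singleton] at this
    exact hc this.symm

end AuxFinsupp
section AuxModule

variable {M : Type} [AddCommGroup M] [Module (MvPolynomial (Phat P) K) M] [Module K M]
  [IsScalarTower K (MvPolynomial (Phat P) K) M]

/-- Multiplication by `x_τ` identifies graded pieces (the finrank version). -/
lemma finrank_step (π : (Phat P →₀ ℕ) → Submodule K M)
    (hM : IsSquarefreePMod (K := K) M π)
    (u : Phat P →₀ ℕ) (τ : Phat P)
    (h1 : ChainSupp (u + Finsupp.single τ 1)) (h2 : LeMaxSupp u τ) :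
    Module.finrank K (π (u + Finsupp.single τ 1)) = Module.finrank K (π u) := by
  obtain ⟨-, -, -, hmul, -, hbij⟩ := hM
  have hb := hbij u τ h1 h2
  let L : π u →ₗ[K] π (u + Finsupp.single τ 1) :=
    { toFun := fun x => ⟨(MvPolynomial.X τ : MvPolynomial (Phat P) K) • (x : M),
        hmul u τ x x.2⟩
      map_add' := fun x y => by
        ext
        simp [smul_add]
      map_smul' := fun c x => by
        ext
        exact smul_comm _ _ _ }
  have hLbij : Function.Bijective L := by
    constructor
    · intro x y hxy
      exact Subtype.ext (hb.injOn x.2 y.2 (congrArg Subtype.val hxy))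
    · intro y
      obtain ⟨x, hx, hxy⟩ := hb.surjOn y.2
      exact ⟨⟨x, hx⟩, Subtype.ext hxy⟩
  exact (LinearEquiv.ofBijective L hLbij).finrank_eq.symm

/-- Reduction to the maximal single: `dim M_u = dim M_{e_ρ}` for chains with max `ρ`. -/
lemma finrank_eq_max (π : (Phat P →₀ ℕ) → Submodule K M)
    (hM : IsSquarefreePMod (K := K) M π) :
    ∀ (n : ℕ) (u : Phat P →₀ ℕ), (u.sum fun _ m => m) ≤ n → ChainSupp u →
    ∀ ρ, ρ ∈ u.support → (∀ σ ∈ u.support, (σ : P) ≤ (ρ : P)) →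
    Module.finrank K (π u) = Module.finrank K (π (Finsupp.single ρ 1)) := by
  intro n
  induction n with
  | zero =>
    intro u hn hc ρ hρ hmax
    exfalso
    have := Finsupp.mem_support_iff.1 hρ
    have hle : u ρ ≤ u.sum fun _ m => m := by
      exact Finset.single_le_sum (f := fun σ => u σ) (fun i _ => Nat.zero_le _) hρ
    omega
  | succ n ih =>
    intro u hn hc ρ hρ hmax
    by_cases heq : u = Finsupp.single ρ 1
    · rw [heq]
    -- choose τ to remove
    have hτ : ∃ τ ∈ u.support, τ = ρ → 2 ≤ u ρ := by
      by_cases h2 : 2 ≤ u ρ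
      · exact ⟨ρ, hρ, fun _ => h2⟩
      · have h1 : u ρ = 1 := by
          have := Finsupp.mem_support_iff.1 hρ
          omega
        have : ¬ u.support ⊆ {ρ} := by
          intro hsub
          apply heq
          rw [support_subset_singleton u ρ hsub, h1]
        obtain ⟨τ, hτs, hτρ⟩ := Finset.not_subset.1 this
        exact ⟨τ, hτs, fun hcon => absurd (hcon ▸ (Finset.mem_singleton_self ρ)) hτρ⟩
    obtain ⟨τ, hτs, hτ2⟩ := hτ
    set u' := decE u τ with hu'
    have hadd : u' + Finsupp.single τ 1 = u := sub_single_add u τ hτs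
    have hsub : u'.support ⊆ u.support := sub_single_support_subset u τ
    have hρ' : ρ ∈ u'.support := by
      rw [Finsupp.mem_support_iff, hu', sub_single_apply]
      have := Finsupp.mem_support_iff.1 hρ
      by_cases h : ρ = τ
      · rw [if_pos h]
        have := hτ2 h.symm
        omega
      · rw [if_neg h]
        exact this
    have hchain' : ChainSupp u' := fun σ hσ τ' hτ' => hc σ (hsub hσ) τ' (hsub hτ')
    have step : Module.finrank K (π u) = Module.finrank K (π u') := by
      rw [← hadd]
      exact finrank_step π hM u' τ (by rw [hadd]; exact hc)
        ⟨ρ, hρ', hmax τ hτs, fun σ hσ => hmax σ (hsub hσ)⟩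
    rw [step]
    refine ih u' ?_ hchain' ρ hρ' (fun σ hσ => hmax σ (hsub hσ))
    have hdeg : (u'.sum fun _ m => m) + 1 = u.sum fun _ m => m := by
      rw [hu']; exact totdeg_sub_single u τ hτs
    omega

/-- Reduction to the squarefree vector supported on the same chain. -/
lemma finrank_eq_sqf (π : (Phat P →₀ ℕ) → Submodule K M)
    (hM : IsSquarefreePMod (K := K) M π) :
    ∀ (n : ℕ) (u : Phat P →₀ ℕ), (u.sum fun _ m => m) ≤ n → ChainSupp u →
    Module.finrank K (π u) =
      Module.finrank K (π (∑ σ ∈ u.support, Finsupp.single σ 1)) := by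
  intro n
  induction n with
  | zero =>
    intro u hn hc
    have hu : u = 0 := by
      ext σ
      by_contra hne
      have hσ : σ ∈ u.support := Finsupp.mem_support_iff.2 hne
      have : u σ ≤ u.sum fun _ m => m :=
        Finset.single_le_sum (f := fun σ => u σ) (fun i _ => Nat.zero_le _) hσ
      simp only [Finsupp.coe_zero, Pi.zero_apply] at hne ⊢
      omega
    rw [hu]
    simp
    rfl
  | succ n ih =>
    intro u hn hc
    by_cases hsq : ∀ σ, u σ ≤ 1
    · have : ∑ σ ∈ u.support, Finsupp.single σ (1 : ℕ) = u := by
        ext σ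
        rw [Finsupp.finset_sum_apply]
        have hsum : ∑ τ ∈ u.support, (Finsupp.single τ (1 : ℕ)) σ =
            ∑ τ ∈ u.support, if τ = σ then 1 else 0 :=
          Finset.sum_congr rfl fun τ _ => Finsupp.single_apply
        rw [hsum, Finset.sum_ite_eq' u.support σ (fun _ => 1)]
        by_cases hσ : σ ∈ u.support
        · rw [if_pos hσ]
          have h1 := Finsupp.mem_support_iff.1 hσ
          have h2 := hsq σ
          omega
        · rw [if_neg hσ]
          exact (Finsupp.notMem_support_iff.1 hσ).symm
      rw [this]
    · push_neg at hsq
      obtain ⟨τ, hτ2⟩ := hsq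
      have hτs : τ ∈ u.support := Finsupp.mem_support_iff.2 (by omega)
      set u' := decE u τ with hu'
      have hadd : u' + Finsupp.single τ 1 = u := sub_single_add u τ hτs
      have hsupp' : u'.support = u.support := by
        ext σ
        rw [Finsupp.mem_support_iff, Finsupp.mem_support_iff, hu', sub_single_apply]
        by_cases h : σ = τ
        · subst h
          rw [if_pos rfl]
          omega
        · rw [if_neg h]
      have hchain' : ChainSupp u' := by
        rw [ChainSupp, hsupp']
        exact hc
      obtain ⟨ρ, hρs, hρmax⟩ := chain_exists_max u.support ⟨τ, hτs⟩ hc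
      have step : Module.finrank K (π u) = Module.finrank K (π u') := by
        rw [← hadd]
        exact finrank_step π hM u' τ (by rw [hadd]; exact hc)
          ⟨ρ, hsupp' ▸ hρs, hρmax τ hτs, fun σ hσ => hρmax σ (hsupp' ▸ hσ)⟩
      have hdeg : (u'.sum fun _ m => m) + 1 = u.sum fun _ m => m := by
        rw [hu']; exact totdeg_sub_single u τ hτs
      rw [step, ih u' (by omega) hchain', hsupp']

end AuxModule
section AuxDim

/-- finrank of a finite independent supremum is the sum of finranks. -/
lemma finrank_iSup_eq_sum {V : Type} [AddCommGroup V] [Module K V] {ι : Type} [Fintype ι]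
    (p : ι → Submodule K V) (hfd : ∀ i, FiniteDimensional K (p i)) (hp : iSupIndep p) :
    Module.finrank K ↥(⨆ i, p i) = ∑ i, Module.finrank K (p i) := by
  classical
  have key : ∀ s : Finset ι, Module.finrank K ↥(s.sup p) = ∑ i ∈ s, Module.finrank K (p i) := by
    intro s
    induction s using Finset.induction_on with
    | empty => simp [finrank_bot K V]
    | @insert a s ha ih =>
      rw [Finset.sum_insert ha, ← ih, Finset.sup_insert]
      haveI := hfd a
      haveI : ∀ i, FiniteDimensional K (p i) := hfd
      haveI : FiniteDimensional K ↥(s.sup p) := Submodule.finiteDimensional_finset_sup s p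
      have hdisj : Disjoint (p a) (s.sup p) := by
        refine (hp a).mono_right ?_
        rw [Finset.sup_eq_iSup]
        refine iSup₂_le fun i hi => ?_
        exact le_iSup₂ (f := fun i (_ : i ≠ a) => p i) i (fun hia => ha (hia ▸ hi))
      have h2 := Submodule.finrank_sup_add_finrank_inf_eq (p a) (s.sup p)
      rw [hdisj.eq_bot] at h2
      rw [finrank_bot K V] at h2
      omega
  rw [← Finset.sup_univ_eq_iSup, key Finset.univ]

end AuxDim
section AuxMv

variable {M : Type} [AddCommGroup M] [Module (MvPolynomial (Phat P) K) M] [Module K M]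
  [IsScalarTower K (MvPolynomial (Phat P) K) M]

lemma rkDeg_bound (rk : P → ℕ) (u : Phat P →₀ ℕ) (σ : Phat P) :
    u σ ≤ rkDeg rk u (rk σ.1) := by
  classical
  rw [rkDeg_apply]
  by_cases hσ : σ ∈ u.support
  · have h := Finset.single_le_sum
      (f := fun τ : Phat P => if rk τ.1 = rk σ.1 then u τ else 0)
      (fun τ _ => Nat.zero_le _) hσ
    simpa using h
  · rw [Finsupp.notMem_support_iff.1 hσ]
    exact Nat.zero_le _

/-- The fiber of `rkDeg` over `v` is finite. -/
noncomputable def fiberFintype (rk : P → ℕ) (v : ℕ →₀ ℕ) :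
    Fintype {u : Phat P →₀ ℕ // rkDeg rk u = v} := by
  have hfin : {u : Phat P →₀ ℕ | rkDeg rk u = v}.Finite := by
    have hsub : {u : Phat P →₀ ℕ | rkDeg rk u = v} ⊆
        (fun g : Phat P → ℕ => Finsupp.equivFunOnFinite.symm g) ''
          (Set.univ.pi fun σ : Phat P => Set.Iic (v (rk σ.1))) := by
      intro u hu
      refine ⟨Finsupp.equivFunOnFinite u, fun σ _ => Set.mem_Iic.2 ?_, by simp⟩
      have h := rkDeg_bound rk u σ
      rw [hu] at h
      exact h
    exact Set.Finite.subset
      (Set.Finite.image _ (Set.Finite.pi fun σ => Set.finite_Iic _)) hsub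
  exact hfin.fintype

lemma rk_inj_on_chain (rk : P → ℕ) (hcov : ∀ x y : P, x ⋖ y → rk y = rk x + 1)
    (C : Finset (Phat P))
    (hC : ∀ σ : Phat P, σ ∈ C → ∀ τ : Phat P, τ ∈ C → (σ : P) ≤ (τ : P) ∨ (τ : P) ≤ (σ : P)) :
    ∀ σ ∈ C, ∀ τ ∈ C, rk σ.1 = rk τ.1 → σ = τ := by
  intro σ hσ τ hτ hrk
  by_contra hne
  have hne' : (σ : P) ≠ (τ : P) := fun hc => hne (Subtype.ext hc)
  rcases hC σ hσ τ hτ with hle | hle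
  · have := rk_lt_of_lt rk hcov _ _ (lt_of_le_of_ne hle hne')
    omega
  · have := rk_lt_of_lt rk hcov _ _ (lt_of_le_of_ne hle hne'.symm)
    omega

lemma sum_single_apply' (C : Finset (Phat P)) (w : Phat P → ℕ) (σ : Phat P) :
    (∑ τ ∈ C, Finsupp.single τ (w τ)) σ = if σ ∈ C then w σ else 0 := by
  classical
  rw [Finsupp.finset_sum_apply]
  rw [Finset.sum_congr rfl
    (fun τ _ => (Finsupp.single_apply : (Finsupp.single τ (w τ)) σ = _)),
    Finset.sum_ite_eq' C σ w]

lemma fs_sum_single {α : Type} (u : α →₀ ℕ) :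
    ∑ i ∈ u.support, Finsupp.single i (u i) = u := by
  classical
  conv_rhs => rw [← Finsupp.sum_single u]
  rfl

/-- the dimension of `Mv v` as a sum over chains with rank set `v.support`. -/
lemma finrank_Mv_eq_chains (rk : P → ℕ) (hcov : ∀ x y : P, x ⋖ y → rk y = rk x + 1)
    (π : (Phat P →₀ ℕ) → Submodule K M) (hM : IsSquarefreePMod (K := K) M π)
    (Mv : (ℕ →₀ ℕ) → Submodule K M)
    (hMv : ∀ v, Mv v = ⨆ u : {u : Phat P →₀ ℕ // rkDeg rk u = v}, π u.1) (v : ℕ →₀ ℕ)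
    (S : Finset ℕ) (hS : v.support = S) :
    Module.finrank K (Mv v) =
      ∑ C ∈ (Finset.univ : Finset (Finset (Phat P))).filter
          (fun C => (∀ σ : Phat P, σ ∈ C → ∀ τ : Phat P, τ ∈ C →
              (σ : P) ≤ (τ : P) ∨ (τ : P) ≤ (σ : P)) ∧
            C.image (fun σ => rk σ.1) = S),
        Module.finrank K (π (∑ σ ∈ C, Finsupp.single σ 1)) := by
  subst hS
  classical
  haveI := fiberFintype rk v
  rw [hMv v, finrank_iSup_eq_sum (fun u : {u : Phat P →₀ ℕ // rkDeg rk u = v} => π u.1)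
    (fun u => hM.2.2.1 u.1) (hM.1.submodule_iSupIndep.comp Subtype.val_injective)]
  rw [← Finset.sum_filter_of_ne
    (p := fun u : {u : Phat P →₀ ℕ // rkDeg rk u = v} => ChainSupp u.1)
    (fun u _ hne => by
      by_contra hch
      rw [hM.2.2.2.2.1 u.1 hch] at hne
      exact hne (finrank_bot K M))]
  refine Finset.sum_bij'
    (i := fun u _ => u.1.support)
    (j := fun C hC => ⟨∑ σ ∈ C, Finsupp.single σ (v (rk σ.1)), ?jdeg⟩)
    ?hi ?hj ?left ?right ?val
  case jdeg =>
    rw [Finset.mem_filter] at hC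
    obtain ⟨-, hchain, himg⟩ := hC
    rw [rkDeg_sum]
    have h1 : ∀ σ ∈ C, rkDeg rk (Finsupp.single σ (v (rk σ.1)))
        = Finsupp.single (rk σ.1) (v (rk σ.1)) := fun σ _ => rkDeg_single rk σ _
    rw [Finset.sum_congr rfl h1,
      ← Finset.sum_image (g := fun σ : Phat P => rk σ.1)
        (f := fun i => Finsupp.single i (v i)) (rk_inj_on_chain rk hcov C hchain),
      himg, fs_sum_single]
  case hi =>
    intro u hu
    rw [Finset.mem_filter] at hu ⊢
    refine ⟨Finset.mem_univ _, hu.2, ?_⟩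
    rw [← rkDeg_support rk u.1, u.2]
  case hj =>
    intro C hC
    rw [Finset.mem_filter] at hC ⊢
    obtain ⟨-, hchain, himg⟩ := hC
    refine ⟨Finset.mem_univ _, ?_⟩
    have hsupp : (∑ σ ∈ C, Finsupp.single σ (v (rk σ.1))).support = C := by
      ext σ
      rw [Finsupp.mem_support_iff, sum_single_apply']
      constructor
      · intro hne
        by_contra hc
        exact hne (if_neg hc)
      · intro hσ
        rw [if_pos hσ]
        have : rk σ.1 ∈ v.support := himg ▸ Finset.mem_image_of_mem _ hσ
        exact Finsupp.mem_support_iff.1 this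
    intro σ hσ τ hτ
    rw [hsupp] at hσ hτ
    exact hchain σ hσ τ hτ
  case left =>
    rintro ⟨w, hw⟩ hu
    rw [Finset.mem_filter] at hu
    have hchain : ChainSupp w := hu.2
    refine Subtype.ext ?_
    have key : ∀ σ ∈ w.support, v (rk σ.1) = w σ := by
      intro σ hσ
      rw [← hw, rkDeg_apply]
      rw [Finset.sum_eq_single_of_mem σ hσ
        (fun τ hτ hne => if_neg (fun hc =>
          hne (rk_inj_on_chain rk hcov w.support hchain τ hτ σ hσ hc)))]
      rw [if_pos rfl]
    calc (∑ σ ∈ w.support, Finsupp.single σ (v (rk σ.1)))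
        = ∑ σ ∈ w.support, Finsupp.single σ (w σ) :=
          Finset.sum_congr rfl (fun σ hσ => by rw [key σ hσ])
      _ = w := fs_sum_single w
  case right =>
    intro C hC
    rw [Finset.mem_filter] at hC
    obtain ⟨-, hchain, himg⟩ := hC
    ext σ
    rw [Finsupp.mem_support_iff, sum_single_apply']
    constructor
    · intro hne
      by_contra hc
      exact hne (if_neg hc)
    · intro hσ
      rw [if_pos hσ]
      have : rk σ.1 ∈ v.support := himg ▸ Finset.mem_image_of_mem _ hσ
      exact Finsupp.mem_support_iff.1 this
  case val =>
    intro u hu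
    rw [Finset.mem_filter] at hu
    exact finrank_eq_sqf π hM (u.1.sum fun _ m => m) u.1 le_rfl hu.2

/-- the dimension of `Mv v` only depends on the support of `v`. -/
lemma finrank_Mv_support (rk : P → ℕ) (hcov : ∀ x y : P, x ⋖ y → rk y = rk x + 1)
    (π : (Phat P →₀ ℕ) → Submodule K M) (hM : IsSquarefreePMod (K := K) M π)
    (Mv : (ℕ →₀ ℕ) → Submodule K M)
    (hMv : ∀ v, Mv v = ⨆ u : {u : Phat P →₀ ℕ // rkDeg rk u = v}, π u.1) (v : ℕ →₀ ℕ) :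
    Module.finrank K (Mv v) = Module.finrank K (Mv (eFin v.support)) := by
  rw [finrank_Mv_eq_chains rk hcov π hM Mv hMv v v.support rfl,
    finrank_Mv_eq_chains rk hcov π hM Mv hMv (eFin v.support) v.support (eFin_support _)]

/-- vanishing of `Mv v` for `v` with support outside `[1, d]`. -/
lemma finrank_Mv_vanish (rk : P → ℕ) (hrank0 : ∀ x : P, rk x = 0 ↔ x = ⊥)
    (hcov : ∀ x y : P, x ⋖ y → rk y = rk x + 1)
    (π : (Phat P →₀ ℕ) → Submodule K M) (hM : IsSquarefreePMod (K := K) M π)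
    (d : ℕ) (hd : ∀ σ : Phat P, d < rk σ.1 → π (Finsupp.single σ 1) = ⊥)
    (Mv : (ℕ →₀ ℕ) → Submodule K M)
    (hMv : ∀ v, Mv v = ⨆ u : {u : Phat P →₀ ℕ // rkDeg rk u = v}, π u.1) (v : ℕ →₀ ℕ)
    (hbad : ¬ v.support ⊆ Finset.Icc 1 d) :
    Module.finrank K (Mv v) = 0 := by
  classical
  haveI := fiberFintype rk v
  rw [hMv v, finrank_iSup_eq_sum (fun u : {u : Phat P →₀ ℕ // rkDeg rk u = v} => π u.1)
    (fun u => hM.2.2.1 u.1) (hM.1.submodule_iSupIndep.comp Subtype.val_injective)]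
  apply Finset.sum_eq_zero
  intro u _
  obtain ⟨i, hiv, hid⟩ := Finset.not_subset.1 hbad
  by_cases hch : ChainSupp u.1
  · have hi' : i ∈ (rkDeg rk u.1).support := by rw [u.2]; exact hiv
    rw [rkDeg_support] at hi'
    obtain ⟨σ, hσ, hσi⟩ := Finset.mem_image.1 hi'
    obtain ⟨ρ, hρ, hρmax⟩ := chain_exists_max u.1.support ⟨σ, hσ⟩ hch
    rw [finrank_eq_max π hM (u.1.sum fun _ m => m) u.1 le_rfl hch ρ hρ hρmax]
    have hσ0 : rk σ.1 ≠ 0 := fun hc => σ.2 ((hrank0 σ.1).1 hc)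
    have hdlt : d < rk σ.1 := by
      have hni : ¬ (1 ≤ i ∧ i ≤ d) := by simpa [Finset.mem_Icc] using hid
      omega
    have hrkρ : d < rk ρ.1 := by
      rcases eq_or_lt_of_le (hρmax σ hσ) with heq | hlt
      · have : σ = ρ := Subtype.ext heq
        subst this
        omega
      · have := rk_lt_of_lt rk hcov _ _ hlt
        omega
    rw [hd ρ hrkρ]
    exact finrank_bot K M
  · rw [hM.2.2.2.2.1 u.1 hch]
    exact finrank_bot K M

end AuxMv
section AuxPS

lemma eFin_insert (a : ℕ) (S : Finset ℕ) (ha : a ∉ S) :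
    eFin (insert a S) = Finsupp.single a 1 + eFin S := by
  rw [eFin, eFin, Finset.sum_insert ha]

lemma prod_one_sub_X (s : Finset ℕ) :
    (∏ i ∈ s, (1 - MvPowerSeries.X i : MvPowerSeries ℕ ℤ)) =
      ∑ S ∈ s.powerset, MvPowerSeries.monomial (eFin S) ((-1 : ℤ) ^ S.card) := by
  classical
  induction s using Finset.induction_on with
  | empty =>
    rw [Finset.prod_empty, Finset.powerset_empty, Finset.sum_singleton]
    rw [show eFin (∅ : Finset ℕ) = 0 by rw [eFin, Finset.sum_empty]]
    rw [Finset.card_empty, pow_zero, MvPowerSeries.monomial_zero_one]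
  | @insert a s ha ih =>
    rw [Finset.prod_insert ha, ih, Finset.sum_powerset_insert ha]
    rw [sub_mul, one_mul, Finset.mul_sum, sub_eq_add_neg]
    congr 1
    rw [← Finset.sum_neg_distrib]
    refine Finset.sum_congr rfl fun S hS => ?_
    have haS : a ∉ S := fun hc => ha (Finset.mem_powerset.1 hS hc)
    rw [eFin_insert a S haS, Finset.card_insert_of_notMem haS,
      MvPowerSeries.X, MvPowerSeries.monomial_mul_monomial, ← map_neg, pow_succ]
    congr 1
    ring

end AuxPS
section AuxComb

lemma comb (d : ℕ) (g : (ℕ →₀ ℕ) → ℤ) (f h : Finset ℕ → ℤ)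
    (hsupp : ∀ v : ℕ →₀ ℕ, g v = g (eFin v.support))
    (hvan : ∀ v : ℕ →₀ ℕ, ¬ v.support ⊆ Finset.Icc 1 d → g v = 0)
    (hgf : ∀ S : Finset ℕ, f S = g (eFin S))
    (hh : ∀ S : Finset ℕ, h S = ∑ T ∈ S.powerset, (-1 : ℤ) ^ (S.card - T.card) * f T)
    (v : ℕ →₀ ℕ) :
    ∑ S ∈ (Finset.Icc 1 d).powerset,
        (if eFin S ≤ v then (-1 : ℤ) ^ S.card * g (v - eFin S) else 0)
      = ∑ S ∈ (Finset.Icc 1 d).powerset, (if v = eFin S then h S else 0) := by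
  classical
  by_cases hA : v.support ⊆ Finset.Icc 1 d
  · -- good support
    have hle : ∀ S : Finset ℕ, eFin S ≤ v ↔ S ⊆ v.support := by
      intro S
      rw [eFin_le_iff]
      constructor
      · intro hl i hi
        rw [Finsupp.mem_support_iff]
        have := hl i hi
        omega
      · intro hsub i hi
        have := Finsupp.mem_support_iff.1 (hsub hi)
        omega
    have hfilter : (Finset.Icc 1 d).powerset.filter (fun S => eFin S ≤ v)
        = v.support.powerset := by
      ext S
      rw [Finset.mem_filter, Finset.mem_powerset, Finset.mem_powerset, hle]
      exact ⟨fun hx => hx.2, fun h2 => ⟨h2.trans hA, h2⟩⟩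
    have hstep : ∑ S ∈ (Finset.Icc 1 d).powerset,
        (if eFin S ≤ v then (-1 : ℤ) ^ S.card * g (v - eFin S) else 0)
        = ∑ S ∈ v.support.powerset, (-1 : ℤ) ^ S.card * g (v - eFin S) := by
      rw [← hfilter, Finset.sum_filter]
    by_cases hsq : ∀ i, v i ≤ 1
    · -- v is squarefree
      have hveq : v = eFin v.support := by
        ext i
        rw [eFin_apply]
        by_cases hi : i ∈ v.support
        · rw [if_pos hi]
          have h1 := Finsupp.mem_support_iff.1 hi
          have h2 := hsq i
          omega
        · rw [if_neg hi]
          exact Finsupp.notMem_support_iff.1 hi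
      have hsdiff : ∀ S ∈ v.support.powerset, v - eFin S = eFin (v.support \ S) := by
        intro S hS
        have hSA := Finset.mem_powerset.1 hS
        ext i
        rw [Finsupp.tsub_apply, eFin_apply, eFin_apply]
        by_cases hiS : i ∈ S
        · have h1 := Finsupp.mem_support_iff.1 (hSA hiS)
          have h2 := hsq i
          rw [if_pos hiS, if_neg (fun hc => (Finset.mem_sdiff.1 hc).2 hiS)]
          omega
        · rw [if_neg hiS]
          by_cases hiA : i ∈ v.support
          · have h1 := Finsupp.mem_support_iff.1 hiA
            have h2 := hsq i
            rw [if_pos (Finset.mem_sdiff.2 ⟨hiA, hiS⟩)]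
            omega
          · rw [if_neg (fun hc => hiA (Finset.mem_sdiff.1 hc).1)]
            have := Finsupp.notMem_support_iff.1 hiA
            omega
      have hRr : ∑ S ∈ (Finset.Icc 1 d).powerset, (if v = eFin S then h S else 0)
          = h v.support := by
        rw [Finset.sum_eq_single_of_mem v.support (Finset.mem_powerset.2 hA)]
        · rw [if_pos hveq]
        · intro S hS hne
          rw [if_neg]
          intro hc
          apply hne
          calc S = (eFin S).support := (eFin_support S).symm
            _ = v.support := by rw [← hc]
      rw [hRr, hstep]
      calc ∑ S ∈ v.support.powerset, (-1 : ℤ) ^ S.card * g (v - eFin S)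
          = ∑ S ∈ v.support.powerset, (-1 : ℤ) ^ S.card * f (v.support \ S) :=
            Finset.sum_congr rfl (fun S hS => by rw [hsdiff S hS, ← hgf])
        _ = ∑ T ∈ v.support.powerset, (-1 : ℤ) ^ (v.support.card - T.card) * f T := by
            refine Finset.sum_bij' (i := fun S _ => v.support \ S)
              (j := fun T _ => v.support \ T) ?_ ?_ ?_ ?_ ?_
            · intro S hS
              exact Finset.mem_powerset.2 (Finset.sdiff_subset)
            · intro T hT
              exact Finset.mem_powerset.2 (Finset.sdiff_subset)
            · intro S hS
              exact sdiff_sdiff_eq_self (Finset.mem_powerset.1 hS)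
            · intro T hT
              exact sdiff_sdiff_eq_self (Finset.mem_powerset.1 hT)
            · intro S hS
              have hSA := Finset.mem_powerset.1 hS
              have hcard := Finset.card_le_card hSA
              rw [Finset.card_sdiff_of_subset hSA]
              congr 2
              omega
        _ = h v.support := (hh v.support).symm
    · -- some coordinate is at least 2
      push_neg at hsq
      obtain ⟨i, hi2⟩ := hsq
      have hiA : i ∈ v.support := Finsupp.mem_support_iff.2 (by omega)
      have hR : ∀ S ∈ (Finset.Icc 1 d).powerset, (if v = eFin S then h S else 0) = 0 := by
        intro S hS
        rw [if_neg]
        intro hc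
        have hvi : v i ≤ 1 := by
          rw [hc, eFin_apply]
          split_ifs <;> omega
        omega
      rw [hstep, Finset.sum_congr rfl hR, Finset.sum_const_zero]
      have hA' : v.support = insert i (v.support.erase i) := (Finset.insert_erase hiA).symm
      rw [hA', Finset.sum_powerset_insert (Finset.notMem_erase i _)]
      rw [← Finset.sum_add_distrib]
      apply Finset.sum_eq_zero
      intro S hS
      have hiS : i ∉ S := fun hc => Finset.notMem_erase i _ (Finset.mem_powerset.1 hS hc)
      have hgeq : g (v - eFin (insert i S)) = g (v - eFin S) := by
        rw [hsupp (v - eFin (insert i S)), hsupp (v - eFin S)]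
        congr 2
        ext j
        rw [Finsupp.mem_support_iff, Finsupp.mem_support_iff, Finsupp.tsub_apply,
          Finsupp.tsub_apply, eFin_apply, eFin_apply]
        by_cases hj : j = i
        · subst hj
          rw [if_pos (Finset.mem_insert_self _ _), if_neg hiS]
          omega
        · simp [Finset.mem_insert, hj]
      rw [Finset.card_insert_of_notMem hiS, hgeq, pow_succ]
      ring
  · -- bad support: both sides vanish
    obtain ⟨i, hiv, hid⟩ := Finset.not_subset.1 hA
    have hL : ∀ S ∈ (Finset.Icc 1 d).powerset,
        (if eFin S ≤ v then (-1 : ℤ) ^ S.card * g (v - eFin S) else 0) = 0 := by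
      intro S hS
      have hiS : i ∉ S := fun hc => hid (Finset.mem_powerset.1 hS hc)
      have hgz : g (v - eFin S) = 0 := by
        apply hvan
        intro hsub
        apply hid
        apply hsub
        rw [Finsupp.mem_support_iff, Finsupp.tsub_apply, eFin_apply, if_neg hiS, Nat.sub_zero]
        exact Finsupp.mem_support_iff.1 hiv
      rw [hgz, mul_zero, ite_self]
    have hR : ∀ S ∈ (Finset.Icc 1 d).powerset, (if v = eFin S then h S else 0) = 0 := by
      intro S hS
      rw [if_neg]
      intro hc
      refine Finsupp.mem_support_iff.1 hiv ?_
      rw [hc, eFin_apply, if_neg (fun hcc => hid (Finset.mem_powerset.1 hS hcc))]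
    rw [Finset.sum_congr rfl hL, Finset.sum_congr rfl hR]

end AuxComb

/-- Lemma 2.5.  Let `M` be a squarefree `P`-module of
dimension `d`, with the `ℕ^d`-grading induced by `deg x_σ = e_{rk σ}`; its
`v`-th graded piece is `M_v = ⊕_{rkDeg u = v} M_u`.  Then the `ℕ^d`-graded
Hilbert series of `M` equals `(∑_{S ⊆ [d]} h_S(M) t^S) / ∏_{i=1}^d (1 - t_i)`,
where `h_S(M) = ∑_{T ⊆ S} (-1)^{|S|-|T|} dim_K M_{e_T}`. -/
theorem squarefree_hilbert_series
    (rk : P → ℕ)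
    (hrank0 : ∀ x : P, rk x = 0 ↔ x = ⊥)
    (hcov : ∀ x y : P, x ⋖ y → rk y = rk x + 1)
    (M : Type) [AddCommGroup M]
    [Module (MvPolynomial (Phat P) K) M] [Module K M]
    [IsScalarTower K (MvPolynomial (Phat P) K) M]
    (π : (Phat P →₀ ℕ) → Submodule K M)
    (hM : IsSquarefreePMod (K := K) M π)
    (d : ℕ)
    -- `M` has dimension (at most) `d`: components of rank `> d` vanish
    (hd : ∀ σ : Phat P, d < rk σ.1 → π (Finsupp.single σ 1) = ⊥)
    -- the `ℕ^d`-graded pieces of `M`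
    (Mv : (ℕ →₀ ℕ) → Submodule K M)
    (hMv : ∀ v, Mv v = ⨆ u : {u : Phat P →₀ ℕ // rkDeg rk u = v}, π u.1)
    -- the `ℕ^d`-graded Hilbert series of `M`
    (H : MvPowerSeries ℕ ℤ)
    (hH : ∀ v : ℕ →₀ ℕ, MvPowerSeries.coeff v H = (Module.finrank K (Mv v) : ℤ))
    -- the flag `f`- and `h`-vectors of `M`
    (f h : Finset ℕ → ℤ)
    (hf : ∀ S : Finset ℕ, f S =
      (Module.finrank K (Mv (∑ i ∈ S, Finsupp.single i 1)) : ℤ))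
    (hh : ∀ S : Finset ℕ, h S =
      ∑ T ∈ S.powerset, (-1 : ℤ) ^ (S.card - T.card) * f T) :
    (∏ i ∈ Finset.Icc 1 d, (1 - MvPowerSeries.X i)) * H =
      ∑ S ∈ (Finset.Icc 1 d).powerset,
        MvPowerSeries.monomial (∑ i ∈ S, Finsupp.single i 1) (h S) := by
  classical
  set g : (ℕ →₀ ℕ) → ℤ := fun w => (Module.finrank K (Mv w) : ℤ) with hgdef
  refine MvPowerSeries.ext fun v => ?_
  rw [prod_one_sub_X, Finset.sum_mul, map_sum, map_sum]
  have hterm : ∀ S ∈ (Finset.Icc 1 d).powerset,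
      MvPowerSeries.coeff v
          (MvPowerSeries.monomial (eFin S) ((-1 : ℤ) ^ S.card) * H)
        = (if eFin S ≤ v then (-1 : ℤ) ^ S.card * g (v - eFin S) else 0) := by
    intro S _
    rw [MvPowerSeries.coeff_monomial_mul]
    split_ifs with hle
    · rw [hH]
    · rfl
  have hterm2 : ∀ S ∈ (Finset.Icc 1 d).powerset,
      MvPowerSeries.coeff v
          (MvPowerSeries.monomial (∑ i ∈ S, Finsupp.single i 1) (h S))
        = (if v = eFin S then h S else 0) := by
    intro S _
    rw [show (∑ i ∈ S, Finsupp.single i 1) = eFin S from rfl, MvPowerSeries.coeff_monomial]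
  rw [Finset.sum_congr rfl hterm, Finset.sum_congr rfl hterm2]
  refine comb d g f h ?_ ?_ ?_ hh v
  · intro w
    rw [hgdef]
    simp only []
    rw [finrank_Mv_support rk hcov π hM Mv hMv w]
  · intro w hw
    rw [hgdef]
    simp only []
    rw [finrank_Mv_vanish rk hrank0 hcov π hM d hd Mv hMv w hw]
    rfl
  · intro S
    rw [hgdef, hf S]
    rfl
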